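/- arXiv:2509.03390 — 2 statements merged into one kernel-verified Lean document; each statement's English description precedes it below -/
import Mathlib

section
/- For any partition λ, the Sprague-Grundy value of λ under RIT equals the Sprague-Grundy value of the Nim position rem(λ), i.e., G_RIT(λ) = XOR over odd indices j of (λ_j - λ_{j+1}). -/
/-- The `j`-th part (0-indexed) of a partition given as a list, `0` beyond the end. -/
def part (l : List ℕ) (j : ℕ) : ℕ := l.getD j 0

/-- A partition: a nonincreasing list of positive integers. -/
def IsPartition (l : List ℕ) : Prop :=
  l.Chain' (· ≥ ·) ∧ ∀ x ∈ l, 0 < x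

/-- RIT move: replace the part at (0-indexed) position `i` by a smaller value `v`,
keeping the sequence nonincreasing, then drop the (trailing) zeros. -/
def RitMove (l l' : List ℕ) : Prop :=
  ∃ i v, i < l.length ∧ v < part l i ∧ (l.set i v).Chain' (· ≥ ·) ∧
    l' = (l.set i v).filter (fun x => x ≠ 0)

/-- RIT move on an odd-numbered row (1-indexed), i.e. an even 0-indexed position. -/
def RitMoveOdd (l l' : List ℕ) : Prop :=
  ∃ i v, i < l.length ∧ i % 2 = 0 ∧ v < part l i ∧ (l.set i v).Chain' (· ≥ ·) ∧
    l' = (l.set i v).filter (fun x => x ≠ 0)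

/-- RIT move on an even-numbered row (1-indexed), i.e. an odd 0-indexed position. -/
def RitMoveEven (l l' : List ℕ) : Prop :=
  ∃ i v, i < l.length ∧ i % 2 = 1 ∧ v < part l i ∧ (l.set i v).Chain' (· ≥ ·) ∧
    l' = (l.set i v).filter (fun x => x ≠ 0)

/-- `core λ = (λ₂, λ₂, λ₄, λ₄, …)` (1-indexed parts), as a `0`-padded sequence. -/
def core (l : List ℕ) : ℕ → ℕ := fun j => part l (2 * (j / 2) + 1)

/-- `rem λ = (λ₁ - λ₂, λ₃ - λ₄, …)` (1-indexed parts), as a `0`-padded sequence. -/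
def rem (l : List ℕ) : ℕ → ℕ := fun i => part l (2 * i) - part l (2 * i + 1)

/-- A Nim move strictly decreases exactly one coordinate. -/
def NimMove (p q : ℕ → ℕ) : Prop := ∃ i, q i < p i ∧ ∀ j, j ≠ i → q j = p j

/-- The nim-sum (bitwise XOR) of the remnant of `l`:
`(λ₁ - λ₂) ⊕ (λ₃ - λ₄) ⊕ ⋯ ⊕ (λ_{2⌈r/2⌉-1} - λ_{2⌈r/2⌉})`. -/
def nimSum (l : List ℕ) : ℕ :=
  (List.ofFn (fun i : Fin ((l.length + 1) / 2) => rem l i)).foldr (· ^^^ ·) 0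

/-- The minimal excludant of a set of naturals. -/
noncomputable def mexOf (S : Set ℕ) : ℕ := sInf {n | n ∉ S}

/-- `G` is the (normal play) Sprague-Grundy function of RIT. -/
def IsRitGrundy (G : List ℕ → ℕ) : Prop :=
  ∀ l, IsPartition l → G l = mexOf {n | ∃ l', RitMove l l' ∧ G l' = n}

/-- `G` is the misère Grundy function of RIT (value `1` at the terminal position). -/
def IsRitMisereGrundy (G : List ℕ → ℕ) : Prop :=
  G [] = 1 ∧ ∀ l, IsPartition l → l ≠ [] →
    G l = mexOf {n | ∃ l', RitMove l l' ∧ G l' = n}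

/-- `G` is the misère Grundy function of Nim on `0`-padded sequences of heaps. -/
def IsNimMisereGrundy (G : (ℕ → ℕ) → ℕ) : Prop :=
  (∀ p : ℕ → ℕ, (∀ i, p i = 0) → G p = 1) ∧
  (∀ p : ℕ → ℕ, (Function.support p).Finite → (∃ i, p i ≠ 0) →
    G p = mexOf {n | ∃ q, NimMove p q ∧ G q = n})

/-- `P` is the set of P-positions of RIT under normal play. -/
def IsRitP (P : List ℕ → Prop) : Prop :=
  ∀ l, IsPartition l → (P l ↔ ∀ l', RitMove l l' → ¬ P l')


/-! ### Auxiliary development -/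

section Aux

/-- xor-sum of `f 0, …, f (n-1)`. -/
def xsum (f : ℕ → ℕ) : ℕ → ℕ
  | 0 => 0
  | n + 1 => xsum f n ^^^ f n

lemma xsum_shift (f : ℕ → ℕ) (n : ℕ) :
    xsum f (n + 1) = f 0 ^^^ xsum (fun i => f (i + 1)) n := by
  induction n with
  | zero => simp [xsum]
  | succ n ih =>
    show xsum f (n + 1) ^^^ f (n + 1) = _
    rw [ih]
    show _ = f 0 ^^^ (xsum (fun i => f (i + 1)) n ^^^ f (n + 1))
    rw [Nat.xor_assoc]

lemma ofFn_foldr_eq_xsum (n : ℕ) (f : ℕ → ℕ) :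
    (List.ofFn (fun i : Fin n => f i)).foldr (· ^^^ ·) 0 = xsum f n := by
  induction n generalizing f with
  | zero => simp [xsum]
  | succ n ih =>
    rw [List.ofFn_succ, List.foldr_cons, xsum_shift]
    have := ih (fun i => f (i + 1))
    simp only [Fin.val_succ] at *
    rw [this]
    rfl

lemma xsum_congr {f g : ℕ → ℕ} (n : ℕ) (h : ∀ i < n, f i = g i) :
    xsum f n = xsum g n := by
  induction n with
  | zero => rfl
  | succ n ih =>
    show xsum f n ^^^ f n = xsum g n ^^^ g n
    rw [ih (fun i hi => h i (by omega)), h n (by omega)]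

lemma xsum_eq_of_zero {f : ℕ → ℕ} {n m : ℕ} (hnm : n ≤ m)
    (h : ∀ i, n ≤ i → f i = 0) : xsum f m = xsum f n := by
  induction m with
  | zero =>
    have hn0 : n = 0 := by omega
    subst hn0; rfl
  | succ m ih =>
    rcases Nat.lt_or_ge n (m + 1) with hlt | hge
    · show xsum f m ^^^ f m = xsum f n
      rw [h m (by omega), Nat.xor_zero, ih (by omega)]
    · have : n = m + 1 := by omega
      rw [this]

lemma xsum_update {f g : ℕ → ℕ} {k : ℕ} (n : ℕ) (hk : k < n)
    (hfg : ∀ j, j ≠ k → f j = g j) :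
    xsum g n = xsum f n ^^^ f k ^^^ g k := by
  induction n with
  | zero => omega
  | succ n ih =>
    show xsum g n ^^^ g n = (xsum f n ^^^ f n) ^^^ f k ^^^ g k
    rcases Nat.lt_or_ge k n with hlt | hge
    · rw [ih hlt, hfg n (by omega)]
      ac_rfl
    · have hkn : k = n := by omega
      subst hkn
      rw [xsum_congr k (fun i hi => hfg i (by omega)), Nat.xor_xor_cancel_right]

lemma testBit_xsum {f : ℕ → ℕ} {n b : ℕ} (h : ∀ k < n, (f k).testBit b = false) :
    (xsum f n).testBit b = false := by
  induction n with
  | zero => simp [xsum]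
  | succ n ih =>
    show (xsum f n ^^^ f n).testBit b = false
    rw [Nat.testBit_xor, ih (fun k hk => h k (by omega)), h n (by omega)]
    rfl

lemma xor_eq_self {a x : ℕ} (h : a ^^^ x = a) : x = 0 := by
  have := congrArg (a ^^^ ·) h
  simpa [← Nat.xor_assoc, Nat.xor_self, Nat.zero_xor] using this

/-- Bouton's construction: from a Nim position with xor-sum `s`, every value
`t < s` is reachable by decreasing a single heap. -/
lemma bouton {f : ℕ → ℕ} {N t : ℕ} (ht : t < xsum f N) :
    ∃ k < N, ∃ u < f k, xsum (Function.update f k u) N = t := by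
  set s := xsum f N with hs
  have hd : t ^^^ s ≠ 0 := fun h => by
    rw [Nat.xor_eq_zero_iff] at h; omega
  obtain ⟨b, hb, hb'⟩ := Nat.exists_most_significant_bit hd
  have hagree : ∀ j, b < j → t.testBit j = s.testBit j := by
    intro j hj
    have := hb' j hj
    rw [Nat.testBit_xor] at this
    cases h1 : t.testBit j <;> cases h2 : s.testBit j <;> simp_all
  have hsb : s.testBit b = true := by
    by_contra hsb
    have hsbf : s.testBit b = false := by simpa using hsb
    have htb : t.testBit b = true := by
      rw [Nat.testBit_xor] at hb
      cases h1 : t.testBit b <;> simp [h1, hsbf] at hb ⊢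
    exact absurd (Nat.lt_of_testBit b hsbf htb (fun j hj => (hagree j hj).symm)) (by omega)
  have hex : ∃ k, k < N ∧ (f k).testBit b = true := by
    by_contra hne
    push_neg at hne
    have : (xsum f N).testBit b = false :=
      testBit_xsum (fun k hk => by simpa using hne k hk)
    rw [← hs] at this; rw [this] at hsb; exact Bool.noConfusion hsb
  obtain ⟨k, hkN, hkb⟩ := hex
  set u := f k ^^^ (t ^^^ s) with hu
  have hub : u.testBit b = false := by
    rw [hu, Nat.testBit_xor, hkb, hb]; rfl
  have hult : u < f k := by
    refine Nat.lt_of_testBit b hub hkb (fun j hj => ?_)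
    rw [hu, Nat.testBit_xor, hb' j hj]
    simp
  refine ⟨k, hkN, u, hult, ?_⟩
  have := xsum_update (f := f) (g := Function.update f k u) N hkN
    (fun j hj => (Function.update_of_ne hj u f).symm)
  rw [this, Function.update_self, hu]
  rw [Nat.xor_assoc, Nat.xor_xor_cancel_left, ← Nat.xor_assoc, Nat.xor_comm s t,
    Nat.xor_assoc, Nat.xor_self, Nat.xor_zero]

/-! ### Parts of lists -/

lemma part_eq_zero {l : List ℕ} {j : ℕ} (h : l.length ≤ j) : part l j = 0 :=
  List.getD_eq_default l 0 h

lemma part_eq_getElem {l : List ℕ} {j : ℕ} (h : j < l.length) : part l j = l[j] :=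
  List.getD_eq_getElem l 0 h

lemma part_pos {l : List ℕ} (hl : IsPartition l) {j : ℕ} (h : j < l.length) :
    0 < part l j := by
  rw [part_eq_getElem h]
  exact hl.2 _ (List.getElem_mem h)

lemma part_set {l : List ℕ} {i : ℕ} (v : ℕ) (hi : i < l.length) (j : ℕ) :
    part (l.set i v) j = if j = i then v else part l j := by
  by_cases hj : j < l.length
  · rw [part_eq_getElem (by simpa using hj), List.getElem_set]
    by_cases h' : j = i
    · simp [h']
    · simp only [if_neg h', if_neg (fun h : i = j => h' h.symm)]
      exact (part_eq_getElem hj).symm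
  · have h1 : l.length ≤ j := by omega
    have hij : j ≠ i := by omega
    rw [part_eq_zero (by simpa using h1), part_eq_zero h1, if_neg hij]

lemma part_anti {l : List ℕ} (hc : l.Chain' (· ≥ ·)) {a b : ℕ} (hab : a ≤ b) :
    part l b ≤ part l a := by
  have step : ∀ c : ℕ, part l (c + 1) ≤ part l c := by
    intro c
    by_cases hc1 : c + 1 < l.length
    · rw [part_eq_getElem hc1, part_eq_getElem (by omega)]
      have := List.isChain_iff_getElem.mp hc c (by omega)
      simpa using this
    · rw [part_eq_zero (by omega)]
      exact Nat.zero_le _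
  exact antitone_nat_of_succ_le step hab

lemma chain'_of_part {l : List ℕ}
    (h : ∀ j, j + 1 < l.length → part l (j + 1) ≤ part l j) :
    l.Chain' (· ≥ ·) := by
  apply List.isChain_iff_getElem.mpr
  intro i hi
  have h2 : i + 1 < l.length := by omega
  have := h i h2
  rw [part_eq_getElem h2, part_eq_getElem (by omega)] at this
  simpa using this

/-! ### Analysis of a RIT move -/

lemma sum_set_lt : ∀ (l : List ℕ) (i v : ℕ), i < l.length → v < part l i →
    (l.set i v).sum < l.sum
  | a :: t, 0, v, _, hv => by
    simp only [List.set_cons_zero, List.sum_cons]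
    simp only [part, List.getD_cons_zero] at hv
    omega
  | a :: t, i + 1, v, hi, hv => by
    simp only [List.set_cons_succ, List.sum_cons]
    have := sum_set_lt t i v (by simpa using hi)
      (by simpa [part, List.getD_cons_succ] using hv)
    omega

lemma move_spec {l : List ℕ} (hl : IsPartition l) {i v : ℕ}
    (hi : i < l.length) (hv : v < part l i) (hc : (l.set i v).Chain' (· ≥ ·)) :
    (∀ j, part ((l.set i v).filter (fun x => x ≠ 0)) j = part (l.set i v) j) ∧
    IsPartition ((l.set i v).filter (fun x => x ≠ 0)) ∧
    ((l.set i v).filter (fun x => x ≠ 0)).length ≤ l.length ∧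
    ((l.set i v).filter (fun x => x ≠ 0)).sum < l.sum := by
  set m := l.set i v with hm
  set l' := m.filter (fun x => x ≠ 0) with hl'
  have hsub : l'.Sublist m := List.filter_sublist
  have hlen : l'.length ≤ l.length := by
    have := hsub.length_le
    simpa [hm] using this
  have hsum : l'.sum < l.sum := by
    have h1 : l'.sum ≤ m.sum := hsub.sum_le_sum (fun a _ => Nat.zero_le a)
    have h2 : m.sum < l.sum := sum_set_lt l i v hi hv
    omega
  have hpos' : ∀ x ∈ l', 0 < x := by
    intro x hx
    have := List.of_mem_filter hx
    simp only [ne_eq, decide_eq_true_eq] at this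
    omega
  by_cases hv0 : v = 0
  · -- the zero must be in the last position
    subst hv0
    have hlast : i + 1 = l.length := by
      by_contra hne
      have h1 : i + 1 < l.length := by omega
      have h2 : part m (i + 1) ≤ part m i := part_anti hc (by omega)
      rw [part_set 0 hi i, if_pos rfl] at h2
      rw [part_set 0 hi (i + 1), if_neg (by omega)] at h2
      have := part_pos hl h1
      omega
    have hmtake : m = l.take i ++ [0] := by
      rw [hm, List.set_eq_take_append_cons_drop, if_pos hi,
        List.drop_eq_nil_of_le (by omega)]
    have htpos : ∀ x ∈ l.take i, 0 < x := fun x hx => hl.2 x (List.take_subset i l hx)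
    have hl'take : l' = l.take i := by
      rw [hl', hmtake, List.filter_append]
      have h1 : (l.take i).filter (fun x => x ≠ 0) = l.take i := by
        rw [List.filter_eq_self]
        intro a ha
        have := htpos a ha
        simp only [ne_eq, decide_eq_true_eq]
        omega
      have h0 : ([0] : List ℕ).filter (fun x => x ≠ 0) = [] := rfl
      rw [h1, h0, List.append_nil]
    have htlen : (l.take i).length = i := by
      rw [List.length_take]; omega
    have hparts : ∀ j, part l' j = part m j := by
      intro j
      rw [hl'take]
      rcases Nat.lt_or_ge j i with hj | hj
      · rw [part_eq_getElem (by omega : j < (l.take i).length), List.getElem_take,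
          part_set 0 hi j, if_neg (by omega)]
        exact (part_eq_getElem (by omega)).symm
      · rw [part_eq_zero (by omega)]
        rcases Nat.eq_or_lt_of_le hj with hj' | hj'
        · rw [part_set 0 hi j, if_pos hj'.symm]
        · rw [part_set 0 hi j, if_neg (by omega), part_eq_zero (by omega)]
    refine ⟨hparts, ⟨?_, hpos'⟩, hlen, hsum⟩
    rw [hl'take]
    exact hl.1.take i
  · -- no zeros are produced, the filter does nothing
    have hl'm : l' = m := by
      rw [hl', List.filter_eq_self]
      intro a ha
      rcases List.mem_or_eq_of_mem_set (by simpa [hm] using ha) with h | h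
      · have := hl.2 a h
        simp only [ne_eq, decide_eq_true_eq]; omega
      · subst h; simp only [ne_eq, decide_eq_true_eq]; exact hv0
    refine ⟨fun j => by rw [hl'm], ⟨by rw [hl'm]; exact hc, hpos'⟩, hlen, hsum⟩

/-! ### The remnant under a move -/

lemma rem_move {l : List ℕ} (hl : IsPartition l) {i v : ℕ}
    (hi : i < l.length) (hv : v < part l i) (hc : (l.set i v).Chain' (· ≥ ·)) :
    (∀ j, j ≠ i / 2 → rem ((l.set i v).filter (fun x => x ≠ 0)) j = rem l j) ∧
    rem ((l.set i v).filter (fun x => x ≠ 0)) (i / 2) ≠ rem l (i / 2) := by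
  obtain ⟨hparts, _, _, _⟩ := move_spec hl hi hv hc
  set l' := (l.set i v).filter (fun x => x ≠ 0) with hl'
  have hp : ∀ j, part l' j = if j = i then v else part l j := by
    intro j; rw [hparts j, part_set v hi j]
  constructor
  · intro j hj
    have h1 : 2 * j ≠ i := by omega
    have h2 : 2 * j + 1 ≠ i := by omega
    unfold rem
    rw [hp, hp, if_neg h1, if_neg h2]
  · unfold rem
    rcases Nat.even_or_odd i with ⟨k, hk⟩ | ⟨k, hk⟩
    · -- i = 2k
      have hki : 2 * (i / 2) = i := by omega
      have hki1 : 2 * (i / 2) + 1 ≠ i := by omega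
      rw [hp, hp, if_pos hki, if_neg hki1]
      have hle : part l (2 * (i / 2) + 1) ≤ v := by
        have h2 : part (l.set i v) (i + 1) ≤ part (l.set i v) i := part_anti hc (by omega)
        rw [part_set v hi i, if_pos rfl, part_set v hi (i + 1), if_neg (by omega)] at h2
        have : 2 * (i / 2) + 1 = i + 1 := by omega
        rw [this]; exact h2
      have hvi : v < part l (2 * (i / 2)) := by rw [hki]; exact hv
      omega
    · -- i = 2k + 1
      have hki : 2 * (i / 2) ≠ i := by omega
      have hki1 : 2 * (i / 2) + 1 = i := by omega
      rw [hp, hp, if_neg hki, if_pos hki1]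
      have hle : part l i ≤ part l (2 * (i / 2)) := part_anti hl.1 (by omega)
      have hvi : v < part l i := hv
      have h0 : 0 < part l i := part_pos hl hi
      have he : part l (2 * (i / 2) + 1) = part l i := by rw [hki1]
      omega

/-! ### nimSum via xsum -/

lemma rem_eventually_zero (l : List ℕ) {j : ℕ} (h : (l.length + 1) / 2 ≤ j) :
    rem l j = 0 := by
  have h1 : l.length ≤ 2 * j := by omega
  unfold rem
  rw [part_eq_zero (by omega), part_eq_zero (by omega)]

lemma nimSum_eq_xsum (l : List ℕ) {N : ℕ} (h : (l.length + 1) / 2 ≤ N) :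
    nimSum l = xsum (rem l) N := by
  unfold nimSum
  rw [ofFn_foldr_eq_xsum]
  exact (xsum_eq_of_zero h (fun i hi => rem_eventually_zero l hi)).symm

/-- Every RIT move changes the nim-sum, preserves partitionhood, and
decreases the total sum. -/
lemma move_props {l l' : List ℕ} (hl : IsPartition l) (h : RitMove l l') :
    IsPartition l' ∧ l'.sum < l.sum ∧ nimSum l' ≠ nimSum l := by
  obtain ⟨i, v, hi, hv, hc, rfl⟩ := h
  obtain ⟨hparts, hpart', hlen, hsum⟩ := move_spec hl hi hv hc
  obtain ⟨hrem, hremne⟩ := rem_move hl hi hv hc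
  refine ⟨hpart', hsum, ?_⟩
  set l' := (l.set i v).filter (fun x => x ≠ 0)
  set N := (l.length + 1) / 2 with hN
  have hkN : i / 2 < N := by omega
  rw [nimSum_eq_xsum l (le_refl N), nimSum_eq_xsum l' (N := N) (by omega)]
  have := xsum_update (f := rem l) (g := rem l') N hkN (fun j hj => (hrem j hj).symm)
  rw [this]
  intro heq
  rw [Nat.xor_assoc] at heq
  have := xor_eq_self heq
  rw [Nat.xor_eq_zero_iff] at this
  exact hremne this.symm

/-- For every `t` below the nim-sum there is a move reaching nim-sum `t`. -/
lemma exists_move {l : List ℕ} (hl : IsPartition l) {t : ℕ} (ht : t < nimSum l) :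
    ∃ l', RitMove l l' ∧ IsPartition l' ∧ l'.sum < l.sum ∧ nimSum l' = t := by
  set N := (l.length + 1) / 2 with hN
  rw [nimSum_eq_xsum l (le_refl N)] at ht
  obtain ⟨k, hkN, u, hu, hxu⟩ := bouton ht
  have h2k : 2 * k < l.length := by
    by_contra hge
    have : rem l k = 0 := by
      unfold rem; rw [part_eq_zero (by omega), part_eq_zero (by omega)]
    omega
  set c := part l (2 * k + 1) with hcdef
  set v := c + u with hvdef
  have hcle : c ≤ part l (2 * k) := part_anti hl.1 (by omega)
  have hrk : rem l k = part l (2 * k) - c := rfl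
  have hvlt : v < part l (2 * k) := by omega
  set i := 2 * k with hidef
  have hi : i < l.length := h2k
  have hchain : (l.set i v).Chain' (· ≥ ·) := by
    apply chain'_of_part
    intro j hj
    have hjlen : j + 1 < l.length := by simpa using hj
    rw [part_set v hi, part_set v hi]
    by_cases h1 : j + 1 = i
    · rw [if_pos h1, if_neg (by omega)]
      have := part_anti hl.1 (show j ≤ i from by omega)
      omega
    · by_cases h2 : j = i
      · rw [if_neg h1, if_pos h2]
        have : part l (j + 1) ≤ c := by
          have := part_anti hl.1 (show 2 * k + 1 ≤ j + 1 from by omega)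
          omega
        omega
      · rw [if_neg h1, if_neg h2]
        exact part_anti hl.1 (by omega)
  have hmove : RitMove l ((l.set i v).filter (fun x => x ≠ 0)) :=
    ⟨i, v, hi, hvlt, hchain, rfl⟩
  obtain ⟨hpart', hsum, _⟩ := move_props hl hmove
  refine ⟨_, hmove, hpart', hsum, ?_⟩
  obtain ⟨hparts, _, hlen, _⟩ := move_spec hl hi hvlt hchain
  set l' := (l.set i v).filter (fun x => x ≠ 0)
  have hp : ∀ j, part l' j = if j = i then v else part l j := by
    intro j; rw [hparts j, part_set v hi j]
  rw [nimSum_eq_xsum l' (show (l'.length + 1) / 2 ≤ N from by omega)]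
  rw [← hxu]
  apply xsum_congr
  intro j hjN
  by_cases hjk : j = k
  · subst hjk
    unfold rem
    rw [hp, hp, if_pos rfl, if_neg (by omega), Function.update_self, ← hcdef]
    omega
  · unfold rem
    rw [hp, hp, if_neg (by omega), if_neg (by omega),
      Function.update_of_ne hjk]

end Aux

/-- the Sprague-Grundy value of `λ` under RIT equals the nim-sum of
its remnant. -/
theorem stmt_6 (G : List ℕ → ℕ) (hG : IsRitGrundy G) (l : List ℕ)
    (hl : IsPartition l) : G l = nimSum l := by
  suffices h : ∀ s, ∀ l, IsPartition l → l.sum = s → G l = nimSum l from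
    h l.sum l hl rfl
  intro s
  induction s using Nat.strong_induction_on with
  | _ s ih =>
    intro l hl hsum
    subst hsum
    rw [hG l hl]
    set S := {n | ∃ l', RitMove l l' ∧ G l' = n} with hS
    have h1 : nimSum l ∉ S := by
      rintro ⟨l', hm, hg⟩
      obtain ⟨hp', hs', hne⟩ := move_props hl hm
      rw [ih l'.sum hs' l' hp' rfl] at hg
      exact hne hg
    have h2 : ∀ t, t < nimSum l → t ∈ S := by
      intro t ht
      obtain ⟨l', hm, hp', hs', hns⟩ := exists_move hl ht
      exact ⟨l', hm, by rw [ih l'.sum hs' l' hp' rfl]; exact hns⟩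
    unfold mexOf
    apply le_antisymm
    · exact Nat.sInf_le h1
    · apply le_csInf ⟨nimSum l, h1⟩
      intro b hb
      by_contra hlt
      exact hb (h2 b (by omega))
end

section
/- Any partition of the form (a, a, b, b, ..., z, z) in which every part appears an even number of consecutive times (i.e., λ_{2j-1} = λ_{2j} for all j, with an even number of rows) is a P-position of RIT under normal play. -/
section RitAux

lemma part_set_eq {l : List ℕ} {i v : ℕ} (h : i < l.length) : part (l.set i v) i = v := by
  rw [part_eq_getElem (by simpa using h)]; simp [List.getElem_set]

lemma part_set_ne {l : List ℕ} (i v : ℕ) {j : ℕ} (h : j ≠ i) :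
    part (l.set i v) j = part l j := by
  by_cases hj : j < l.length
  · rw [part_eq_getElem (by simpa using hj), part_eq_getElem hj, List.getElem_set,
      if_neg (fun hh => h hh.symm)]
  · rw [part_eq_zero (by simpa using not_lt.1 hj), part_eq_zero (not_lt.1 hj)]

lemma part_take {l : List ℕ} {n j : ℕ} (h : j < n) : part (l.take n) j = part l j := by
  unfold part
  rw [List.getD_eq_getElem?_getD, List.getD_eq_getElem?_getD, List.getElem?_take, if_pos h]

lemma sum_set_add (l : List ℕ) (i v : ℕ) (h : i < l.length) :
    (l.set i v).sum + part l i = l.sum + v := by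
  induction l generalizing i with
  | nil => simp at h
  | cons a t ih =>
    cases i with
    | zero => simp [part]; omega
    | succ n =>
      have := ih n (by simpa using h)
      simp only [List.set, List.sum_cons, part, List.getD_cons_succ] at *
      omega

lemma pairwise_set_of {m : List ℕ} (hm : m.Pairwise (· ≥ ·)) {k v : ℕ} (hk : k < m.length)
    (hv : v ≤ m[k]) (hnext : ∀ b (hb : b < m.length), k < b → m[b] ≤ v) :
    (m.set k v).Pairwise (· ≥ ·) := by
  rw [List.pairwise_iff_getElem] at hm ⊢
  intro a b ha hb hab
  simp only [List.length_set] at ha hb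
  simp only [List.getElem_set]
  rcases eq_or_ne k a with rfl | hka
  · rw [if_pos rfl, if_neg (by omega)]
    exact hnext b hb hab
  · rw [if_neg hka]
    rcases eq_or_ne k b with rfl | hkb
    · rw [if_pos rfl]
      exact le_trans hv (hm a k ha hk hab)
    · rw [if_neg hkb]
      exact hm a b ha hb hab

lemma filter_pos_eq {m : List ℕ} (h : ∀ x ∈ m, 0 < x) : m.filter (fun x => x ≠ 0) = m :=
  List.filter_eq_self.mpr (fun a ha => by simpa using (h a ha).ne')

lemma rit_key (P : List ℕ → Prop) (hP : IsRitP P) :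
    ∀ n l, l.sum ≤ n → IsPartition l → l.length % 2 = 0 →
      (∀ j, 2 * j + 1 < l.length → part l (2 * j) = part l (2 * j + 1)) → P l := by
  intro n
  induction n using Nat.strong_induction_on with
  | _ n IH =>
  intro l hsum hl heven hpair
  rw [hP l hl]
  rintro l' ⟨i, v, hi, hv, hchain, rfl⟩
  have hlpw : l.Pairwise (· ≥ ·) := List.isChain_iff_pairwise.mp hl.1
  have hspw : (l.set i v).Pairwise (· ≥ ·) := List.isChain_iff_pairwise.mp hchain
  have hspwG := List.pairwise_iff_getElem.mp hspw
  -- the move index must be odd (0-indexed)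
  have hodd : i % 2 = 1 := by
    by_contra h
    have hi1 : i + 1 < l.length := by omega
    have hp := hpair (i / 2) (by omega)
    rw [show 2 * (i / 2) = i by omega] at hp
    have h2 := hspwG i (i + 1) (by simp; omega) (by simp; omega) (by omega)
    rw [List.getElem_set, List.getElem_set, if_pos rfl,
      if_neg (show i ≠ i + 1 by omega)] at h2
    rw [← part_eq_getElem hi1] at h2
    omega
  have hige : 1 ≤ i := by omega
  have hpairi : part l (i - 1) = part l i := by
    have := hpair ((i - 1) / 2) (by omega)
    rw [show 2 * ((i - 1) / 2) = i - 1 by omega, show i - 1 + 1 = i by omega] at this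
    exact this
  rcases Nat.eq_zero_or_pos v with rfl | hvpos
  · -- v = 0 : i must be the last index
    have hilast : i + 1 = l.length := by
      by_contra h
      have hi2 : i + 1 < l.length := by omega
      have h2 := hspwG i (i + 1) (by simp; omega) (by simp; omega) (by omega)
      rw [List.getElem_set, List.getElem_set, if_pos rfl,
        if_neg (show i ≠ i + 1 by omega)] at h2
      have h3 := hl.2 _ (List.getElem_mem hi2)
      omega
    have hfe : (l.set i 0).filter (fun x => x ≠ 0) = l.take i := by
      rw [List.set_eq_take_append_cons_drop, if_pos hi, hilast,
        List.drop_length, List.filter_append]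
      rw [filter_pos_eq (fun x hx => hl.2 x ((List.take_sublist i l).subset hx))]
      simp
    rw [hfe]
    have htlen : (l.take i).length = i := by
      rw [List.length_take]; omega
    have htpw : (l.take i).Pairwise (· ≥ ·) :=
      List.Pairwise.sublist (List.take_sublist i l) hlpw
    have hIP' : IsPartition (l.take i) :=
      ⟨List.isChain_iff_pairwise.mpr htpw,
        fun x hx => hl.2 x ((List.take_sublist i l).subset hx)⟩
    have hfe2 : ((l.take i).set (i - 1) 0).filter (fun x => x ≠ 0) = l.take (i - 1) := by
      rw [List.set_eq_take_append_cons_drop, if_pos (by rw [htlen]; omega)]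
      rw [List.take_take, min_eq_left (by omega), show i - 1 + 1 = i by omega,
        List.drop_take, Nat.sub_self, List.take_zero, List.filter_append,
        filter_pos_eq (fun x hx => hl.2 x ((List.take_sublist _ l).subset hx))]
      simp
    have hchain2 : ((l.take i).set (i - 1) 0).Chain' (· ≥ ·) := by
      refine List.isChain_iff_pairwise.mpr ?_
      refine pairwise_set_of htpw (by rw [htlen]; omega) (Nat.zero_le _) ?_
      intro b hb hbk
      rw [htlen] at hb
      omega
    have hmove2 : RitMove (l.take i) (l.take (i - 1)) := by
      refine ⟨i - 1, 0, by rw [htlen]; omega, ?_, hchain2, hfe2.symm⟩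
      rw [part_take (by omega), hpairi]
      exact hv
    have hsum' : (l.take (i - 1)).sum < l.sum := by
      have h1 := List.sum_take_add_sum_drop l (i - 1)
      rw [List.drop_eq_getElem_cons (show i - 1 < l.length by omega), List.sum_cons] at h1
      have h3 := hl.2 _ (List.getElem_mem (show i - 1 < l.length by omega))
      omega
    have hPl'' : P (l.take (i - 1)) := by
      refine IH (l.take (i - 1)).sum (by omega) _ le_rfl
        ⟨List.isChain_iff_pairwise.mpr
          (List.Pairwise.sublist (List.take_sublist _ l) hlpw),
          fun x hx => hl.2 x ((List.take_sublist _ l).subset hx)⟩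
        (by rw [List.length_take]; omega) ?_
      intro k hk
      rw [List.length_take] at hk
      rw [part_take (by omega), part_take (by omega)]
      exact hpair k (by omega)
    intro hPl'
    rw [hP _ hIP'] at hPl'
    exact hPl' _ hmove2 hPl''
  · -- v > 0 : mirror the move on row i-1
    have hall : ∀ x ∈ l.set i v, 0 < x := by
      intro x hx
      rcases List.mem_or_eq_of_mem_set hx with h | rfl
      · exact hl.2 x h
      · exact hvpos
    have hfe : (l.set i v).filter (fun x => x ≠ 0) = l.set i v := filter_pos_eq hall
    rw [hfe]
    have hIP' : IsPartition (l.set i v) := ⟨hchain, hall⟩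
    have hp1 : part (l.set i v) (i - 1) = part l i := by
      rw [part_set_ne _ _ (by omega), hpairi]
    have hall2 : ∀ x ∈ (l.set i v).set (i - 1) v, 0 < x := by
      intro x hx
      rcases List.mem_or_eq_of_mem_set hx with h | rfl
      · exact hall x h
      · exact hvpos
    have hfe2 : ((l.set i v).set (i - 1) v).filter (fun x => x ≠ 0)
        = (l.set i v).set (i - 1) v := filter_pos_eq hall2
    have hki : i - 1 < (l.set i v).length := by rw [List.length_set]; omega
    have hgetk : (l.set i v)[i - 1]'hki = part l i := by
      rw [← part_eq_getElem hki, hp1]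
    have hchain2 : ((l.set i v).set (i - 1) v).Chain' (· ≥ ·) := by
      refine List.isChain_iff_pairwise.mpr ?_
      refine pairwise_set_of hspw hki (by rw [hgetk]; omega) ?_
      intro b hb hbk
      rcases eq_or_ne b i with rfl | hbi
      · simp [List.getElem_set]
      · have h2 := hspwG i b (by rw [List.length_set]; omega) hb (by omega)
        simp only [List.getElem_set, if_pos rfl] at h2
        rw [if_neg (show i ≠ b from fun h => hbi h.symm)] at h2
        simpa only [List.getElem_set, if_true, if_neg (show i ≠ b from fun h => hbi h.symm)] using h2
    have hmove2 : RitMove (l.set i v) ((l.set i v).set (i - 1) v) := by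
      refine ⟨i - 1, v, hki, ?_, hchain2, hfe2.symm⟩
      rw [hp1]
      exact hv
    have hlen2 : ((l.set i v).set (i - 1) v).length = l.length := by
      simp
    have hIP2 : IsPartition ((l.set i v).set (i - 1) v) := ⟨hchain2, hall2⟩
    have hpair2 : ∀ k, 2 * k + 1 < ((l.set i v).set (i - 1) v).length →
        part ((l.set i v).set (i - 1) v) (2 * k) = part ((l.set i v).set (i - 1) v) (2 * k + 1) := by
      intro k hk
      rw [hlen2] at hk
      rcases eq_or_ne (2 * k + 1) i with he | hne
      · rw [show 2 * k = i - 1 by omega, part_set_eq (by rw [List.length_set]; omega),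
          show i - 1 + 1 = i by omega, part_set_ne _ _ (by omega), part_set_eq hi]
      · have h1 : 2 * k ≠ i - 1 := by omega
        have h2 : 2 * k ≠ i := by omega
        have h3 : 2 * k + 1 ≠ i - 1 := by omega
        rw [part_set_ne _ _ h1, part_set_ne _ _ h2, part_set_ne _ _ h3, part_set_ne _ _ hne]
        exact hpair k hk
    have hs1 := sum_set_add l i v hi
    have hs2 := sum_set_add (l.set i v) (i - 1) v hki
    rw [hp1] at hs2
    have hPl'' : P ((l.set i v).set (i - 1) v) :=
      IH ((l.set i v).set (i - 1) v).sum (by omega) _ le_rfl hIP2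
        (by rw [hlen2]; exact heven) hpair2
    intro hPl'
    rw [hP _ hIP'] at hPl'
    exact hPl' _ hmove2 hPl''

end RitAux

/-- a partition with an even number of rows in which
`λ_{2j-1} = λ_{2j}` for all `j` is a P-position of RIT under normal play. -/
theorem stmt_11 (P : List ℕ → Prop) (hP : IsRitP P) (l : List ℕ)
    (hl : IsPartition l) (heven : l.length % 2 = 0)
    (hpair : ∀ j, 2 * j + 1 < l.length → part l (2 * j) = part l (2 * j + 1)) :
    P l := rit_key P hP l.sum l le_rfl hl heven hpair
end
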